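/- Let d ≥ 4 be even and let R = {v ∈ ℤ^d : v₁² + ⋯ + v_d² = 2} be the set of roots of the root lattice D_d (a set of 2d(d−1) vectors). Then R can be partitioned into d − 1 pairwise disjoint 2-frames, i.e., d − 1 sets each of the form {v₁, …, v_d, −v₁, …, −v_d} with ⟨v_i, v_j⟩ = 2·δ_{ij}; hence the maximum number of pairwise disjoint 2-frames in the roots of D_d is d − 1. -/

import Mathlib

/-- A `2`-frame in `ℤ^d`: a set of the form `{v₁, …, v_d, -v₁, …, -v_d}` with
`⟨vᵢ, vⱼ⟩ = 2·δᵢⱼ` (its members are automatically roots, i.e. of squared norm `2`). -/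
def Is2Frame {d : ℕ} (S : Set (Fin d → ℤ)) : Prop :=
  ∃ v : Fin d → (Fin d → ℤ),
    (∀ i j, ∑ t, v i t * v j t = if i = j then 2 else 0) ∧
    S = Set.range v ∪ Set.range fun i => -(v i)



namespace Stmt10Aux

variable (n : ℕ)

def emb [NeZero n] (x : ZMod n) : Fin (n + 1) := ⟨x.val, by have := ZMod.val_lt x; omega⟩

def prj (k : Fin (n + 1)) : ZMod n := ((k : ℕ) : ZMod n)

variable [NeZero n]

lemma emb_ne_last (x : ZMod n) : emb n x ≠ Fin.last n := by
  simp only [emb, Fin.ne_iff_vne, Fin.val_last]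
  exact (ZMod.val_lt x).ne

lemma prj_emb (x : ZMod n) : prj n (emb n x) = x := ZMod.natCast_rightInverse x

lemma emb_prj {k : Fin (n + 1)} (hk : k ≠ Fin.last n) : emb n (prj n k) = k := by
  have hlt : (k : ℕ) < n := by
    have := k.isLt
    rcases Nat.lt_or_ge (k : ℕ) n with h | h
    · exact h
    · exact absurd (Fin.ext (by omega : (k : ℕ) = n)) hk
  apply Fin.ext
  simp [emb, prj, ZMod.val_natCast, Nat.mod_eq_of_lt hlt]

lemma emb_inj {x y : ZMod n} (h : emb n x = emb n y) : x = y := by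
  have := congrArg (prj n) h
  rwa [prj_emb, prj_emb] at this

def mtch (r : ZMod n) (k : Fin (n + 1)) : Fin (n + 1) :=
  if k = Fin.last n then emb n r
  else if prj n k = r then Fin.last n
  else emb n (2 * r - prj n k)

lemma mtch_last (r : ZMod n) : mtch n r (Fin.last n) = emb n r := by
  rw [mtch, if_pos rfl]

lemma mtch_embr (r : ZMod n) : mtch n r (emb n r) = Fin.last n := by
  rw [mtch, if_neg (emb_ne_last n r), prj_emb, if_pos rfl]

lemma mtch_other (r : ZMod n) {k : Fin (n + 1)} (h1 : k ≠ Fin.last n) (h2 : prj n k ≠ r) :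
    mtch n r k = emb n (2 * r - prj n k) := by
  rw [mtch, if_neg h1, if_neg h2]

lemma two_unit (hodd : Odd n) : IsUnit (2 : ZMod n) := by
  have : ((2 : ℕ) : ZMod n) = 2 := by push_cast; ring
  rw [← this, ZMod.isUnit_iff_coprime]
  exact (Nat.prime_two.coprime_iff_not_dvd).2 (by rcases hodd with ⟨m, rfl⟩; omega)

lemma two_mul_cancel (hodd : Odd n) {x y : ZMod n} (h : 2 * x = 2 * y) : x = y :=
  (two_unit n hodd).mul_left_cancel h

lemma mtch_ne (hodd : Odd n) (r : ZMod n) (k : Fin (n + 1)) : mtch n r k ≠ k := by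
  by_cases h1 : k = Fin.last n
  · rw [h1, mtch_last]; exact emb_ne_last n r
  · by_cases h2 : prj n k = r
    · rw [← emb_prj n h1, h2, mtch_embr]
      exact fun h => emb_ne_last n r h.symm
    · rw [mtch_other n r h1 h2]
      intro h
      have := congrArg (prj n) h
      rw [prj_emb] at this
      exact h2 (two_mul_cancel n hodd (by linear_combination this)).symm

lemma mtch_invol (hodd : Odd n) (r : ZMod n) (k : Fin (n + 1)) :
    mtch n r (mtch n r k) = k := by
  by_cases h1 : k = Fin.last n
  · rw [h1, mtch_last, mtch_embr]
  · by_cases h2 : prj n k = r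
    · have hk : k = emb n r := by rw [← emb_prj n h1, h2]
      rw [hk, mtch_embr, mtch_last]
    · rw [mtch_other n r h1 h2]
      have h1' : emb n (2 * r - prj n k) ≠ Fin.last n := emb_ne_last n _
      have h2' : prj n (emb n (2 * r - prj n k)) ≠ r := by
        rw [prj_emb]
        intro h
        exact h2 (by linear_combination -h)
      rw [mtch_other n r h1' h2', prj_emb]
      have : 2 * r - (2 * r - prj n k) = prj n k := by ring
      rw [this, emb_prj n h1]

lemma mtch_color_inj (hodd : Odd n) {r s : ZMod n} {k : Fin (n + 1)}
    (h : mtch n r k = mtch n s k) : r = s := by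
  by_cases h1 : k = Fin.last n
  · rw [h1, mtch_last, mtch_last] at h
    exact emb_inj n h
  · by_cases h2 : prj n k = r
    · by_cases h3 : prj n k = s
      · rw [← h2, ← h3]
      · have hk : k = emb n r := by rw [← emb_prj n h1, h2]
        rw [hk, mtch_embr] at h
        rw [← hk, mtch_other n s h1 h3] at h
        exact absurd h.symm (emb_ne_last n _)
    · by_cases h3 : prj n k = s
      · have hk : k = emb n s := by rw [← emb_prj n h1, h3]
        rw [hk, mtch_embr] at h
        rw [← hk, mtch_other n r h1 h2] at h
        exact absurd h (emb_ne_last n _)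
      · rw [mtch_other n r h1 h2, mtch_other n s h1 h3] at h
        have := emb_inj n h
        exact two_mul_cancel n hodd (by linear_combination this)

lemma mtch_surj (hodd : Odd n) (a b : Fin (n + 1)) (hab : a ≠ b) : ∃ r, mtch n r a = b := by
  by_cases ha : a = Fin.last n
  · refine ⟨prj n b, ?_⟩
    rw [ha, mtch_last, emb_prj n (by rw [← ha]; exact fun h => hab h.symm)]
  · by_cases hb : b = Fin.last n
    · refine ⟨prj n a, ?_⟩
      have h := mtch_embr n (prj n a)
      rw [emb_prj n ha] at h
      rw [h, hb]
    · obtain ⟨c, hc⟩ := (two_unit n hodd).exists_left_inv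
      refine ⟨c * (prj n a + prj n b), ?_⟩
      have hc2 : c * 2 = 1 := hc
      have hne : prj n a ≠ c * (prj n a + prj n b) := by
        intro h
        have hab2 : prj n a = prj n b := by
          apply two_mul_cancel n hodd
          linear_combination 4 * h + 2 * (prj n a + prj n b) * hc2
        exact hab (by rw [← emb_prj n ha, ← emb_prj n hb, hab2])
      rw [mtch_other n _ ha (fun h => hne h)]
      have : 2 * (c * (prj n a + prj n b)) - prj n a = prj n b := by
        linear_combination (prj n a + prj n b) * hc2
      rw [this, emb_prj n hb]


/-- sign for the frame vector at `k`. -/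
def sgn (r : ZMod n) (k : Fin (n + 1)) : ℤ :=
  if (k : ℕ) < ((mtch n r k : Fin (n + 1)) : ℕ) then 1 else -1

/-- frame vector at `k` for color `r`. -/
def fv (r : ZMod n) (k : Fin (n + 1)) : Fin (n + 1) → ℤ :=
  fun t => (if t = k then 1 else 0) + (if t = mtch n r k then sgn n r k else 0)

lemma sgn_sq (r : ZMod n) (k : Fin (n + 1)) : sgn n r k * sgn n r k = 1 := by
  unfold sgn; split_ifs <;> ring

lemma sgn_cases (r : ZMod n) (k : Fin (n + 1)) : sgn n r k = 1 ∨ sgn n r k = -1 := by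
  unfold sgn; split_ifs <;> simp

lemma sum_if_mul {m : ℕ} (a c : Fin m) (x z : ℤ) :
    ∑ t, (if t = a then x else 0) * (if t = c then z else 0) = if a = c then x * z else 0 := by
  classical
  have h : ∀ t : Fin m, (if t = a then x else 0) * (if t = c then z else 0)
      = if t = a then (if a = c then x * z else 0) else 0 := by
    intro t
    by_cases h1 : t = a
    · subst h1; by_cases h2 : t = c
      · rw [if_pos rfl, if_pos h2, if_pos rfl, if_pos h2]
      · rw [if_pos rfl, if_neg h2, if_pos rfl, if_neg h2, mul_zero]
    · rw [if_neg h1, if_neg h1, zero_mul]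
  rw [Finset.sum_congr rfl fun t _ => h t, Finset.sum_ite_eq' Finset.univ a]
  simp

lemma inner_fv (hodd : Odd n) (r : ZMod n) (i j : Fin (n + 1)) :
    ∑ t, fv n r i t * fv n r j t = if i = j then 2 else 0 := by
  have expand : ∑ t, fv n r i t * fv n r j t =
      (if i = j then (1:ℤ) * 1 else 0) + (if i = mtch n r j then 1 * sgn n r j else 0) +
      ((if mtch n r i = j then sgn n r i * 1 else 0) +
       (if mtch n r i = mtch n r j then sgn n r i * sgn n r j else 0)) := by
    simp only [fv, add_mul, mul_add]
    rw [Finset.sum_add_distrib, Finset.sum_add_distrib, Finset.sum_add_distrib,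
      sum_if_mul, sum_if_mul, sum_if_mul, sum_if_mul]
    ring
  rw [expand]
  by_cases hij : i = j
  · subst hij
    rw [if_pos rfl, if_pos rfl, if_neg (fun h => mtch_ne n hodd r i h.symm),
      if_neg (mtch_ne n hodd r i), if_pos rfl, sgn_sq]
    ring
  · rw [if_neg hij]
    by_cases hjb : mtch n r i = j
    · have hic : mtch n r j = i := by rw [← hjb, mtch_invol n hodd]
      rw [if_pos hic.symm, if_pos hjb, if_neg (by rw [hic]; exact mtch_ne n hodd r i)]
      have hsum : sgn n r i + sgn n r j = 0 := by
        have hvi : ((i : ℕ) : ℤ) ≠ ((j : ℕ) : ℤ) := by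
          intro h; exact hij (Fin.ext (by exact_mod_cast h))
        unfold sgn
        rw [hjb, hic]
        split_ifs with h1 h2 h2 <;> omega
      rw [if_neg hij]
      linarith [hsum]
    · have hic : i ≠ mtch n r j := by
        intro h
        apply hjb
        rw [h, mtch_invol n hodd]
      have hbc : mtch n r i ≠ mtch n r j := by
        intro h
        have := congrArg (mtch n r) h
        rw [mtch_invol n hodd, mtch_invol n hodd] at this
        exact hij this
      rw [if_neg hic, if_neg hjb, if_neg hbc, if_neg hij]
      ring

lemma fv_ne_zero_iff (hodd : Odd n) (r : ZMod n) (k t : Fin (n + 1)) :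
    fv n r k t ≠ 0 ↔ t = k ∨ t = mtch n r k := by
  have hkm : k ≠ mtch n r k := fun h => mtch_ne n hodd r k h.symm
  unfold fv
  by_cases h1 : t = k
  · by_cases h2 : t = mtch n r k
    · exact absurd (h1.symm.trans h2) hkm
    · rw [if_pos h1, if_neg h2]; simp [h1]
  · by_cases h2 : t = mtch n r k
    · rw [if_neg h1, if_pos h2]
      rcases sgn_cases n r k with h | h <;> rw [h] <;> simp [h2]
    · rw [if_neg h1, if_neg h2]; simp [h1, h2]

/-- the `2`-frame of color `r`. -/
def frame (r : ZMod n) : Set (Fin (n + 1) → ℤ) :=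
  Set.range (fv n r) ∪ Set.range (fun k => -(fv n r k))

lemma mem_frame_supp (hodd : Odd n) {r : ZMod n} {w : Fin (n + 1) → ℤ}
    (hw : w ∈ frame n r) : ∃ k, ∀ t, w t ≠ 0 ↔ t = k ∨ t = mtch n r k := by
  rcases hw with ⟨k, rfl⟩ | ⟨k, rfl⟩
  · exact ⟨k, fun t => fv_ne_zero_iff n hodd r k t⟩
  · refine ⟨k, fun t => ?_⟩
    have hrfl : (fun k => -(fv n r k)) k t = -(fv n r k t) := rfl
    rw [hrfl, neg_ne_zero]
    exact fv_ne_zero_iff n hodd r k t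

lemma frame_disjoint (hodd : Odd n) {r s : ZMod n} (hrs : r ≠ s) :
    Disjoint (frame n r) (frame n s) := by
  rw [Set.disjoint_left]
  intro w hwr hws
  obtain ⟨k, hk⟩ := mem_frame_supp n hodd hwr
  obtain ⟨j, hj⟩ := mem_frame_supp n hodd hws
  have hkne : w k ≠ 0 := (hk k).2 (Or.inl rfl)
  have hmne : w (mtch n r k) ≠ 0 := (hk _).2 (Or.inr rfl)
  apply hrs
  rcases (hj k).1 hkne with h1 | h1
  · subst h1
    rcases (hj (mtch n r k)).1 hmne with h2 | h2
    · exact absurd h2 (mtch_ne n hodd r k)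
    · exact mtch_color_inj n hodd h2
  · rcases (hj (mtch n r k)).1 hmne with h2 | h2
    · apply mtch_color_inj n hodd (k := k)
      rw [h2, h1, mtch_invol n hodd]
    · exfalso
      exact mtch_ne n hodd r k (h2.trans h1.symm)
      

lemma mem_frame_of (r : ZMod n) (a : Fin (n + 1)) (c : ℤ) (hc : c = 1 ∨ c = -1) :
    (fun t => (if t = a then c else 0) + (if t = mtch n r a then c * sgn n r a else 0))
      ∈ frame n r := by
  rcases hc with rfl | rfl
  · left
    exact ⟨a, by funext t; show fv n r a t = _; unfold fv; rw [one_mul]⟩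
  · right
    refine ⟨a, ?_⟩
    funext t
    show -(fv n r a t) = _
    unfold fv
    split_ifs <;> ring

lemma root_mem_frame (hodd : Odd n) (r : ZMod n) (a : Fin (n + 1)) (ε δ : ℤ)
    (hε : ε = 1 ∨ ε = -1) (hδ : δ = 1 ∨ δ = -1) (w : Fin (n + 1) → ℤ)
    (hw : w = fun t => (if t = a then ε else 0) + (if t = mtch n r a then δ else 0)) :
    w ∈ frame n r := by
  have hba : mtch n r (mtch n r a) = a := mtch_invol n hodd r a
  have hab : a ≠ mtch n r a := fun h => mtch_ne n hodd r a h.symm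
  have hvne : (a : ℕ) ≠ ((mtch n r a : Fin (n + 1)) : ℕ) := fun h => hab (Fin.ext h)
  have hsum : sgn n r a + sgn n r (mtch n r a) = 0 := by
    unfold sgn
    rw [hba]
    split_ifs <;> omega
  by_cases hcase : δ = ε * sgn n r a
  · rw [hw]
    simp only [hcase]
    exact mem_frame_of n r a ε hε
  · have hsb : sgn n r (mtch n r a) = -sgn n r a := by linarith
    have hδε : ε = δ * sgn n r (mtch n r a) := by
      rw [hsb]
      rcases hε with rfl | rfl <;> rcases hδ with rfl | rfl <;>
        rcases sgn_cases n r a with h | h <;> rw [h] at hcase ⊢ <;> revert hcase <;> norm_num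
    rw [hw]
    have hfun : (fun t => (if t = a then ε else 0) + (if t = mtch n r a then δ else 0))
        = fun t => (if t = mtch n r a then δ else 0) +
            (if t = mtch n r (mtch n r a) then δ * sgn n r (mtch n r a) else 0) := by
      funext t
      rw [hba, ← hδε]
      ring
    rw [hfun]
    exact mem_frame_of n r (mtch n r a) δ hδ

lemma frame_is2Frame (hodd : Odd n) (r : ZMod n) : Is2Frame (frame n r) :=
  ⟨fv n r, inner_fv n hodd r, rfl⟩


lemma fv_is_root (hodd : Odd n) (r : ZMod n) (k : Fin (n + 1)) :
    ∑ t, fv n r k t ^ 2 = 2 := by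
  have h := inner_fv n hodd r k k
  rw [if_pos rfl] at h
  rw [← h]
  exact Finset.sum_congr rfl fun t _ => sq (fv n r k t)

end Stmt10Aux

section Counting

lemma root_struct {d : ℕ} (v : Fin d → ℤ) (h : ∑ t, v t ^ 2 = 2) :
    ∃ a b : Fin d, a ≠ b ∧ (v a = 1 ∨ v a = -1) ∧ (v b = 1 ∨ v b = -1) ∧
      ∀ t, t ≠ a → t ≠ b → v t = 0 := by
  classical
  set s := Finset.univ.filter fun t => v t ≠ 0 with hs
  have hsum : ∑ t ∈ s, v t ^ 2 = 2 := by
    rw [← h]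
    apply Finset.sum_filter_of_ne
    intro x _ hx hv
    exact hx (by rw [hv]; ring)
  have hval : ∀ t ∈ s, v t = 1 ∨ v t = -1 := by
    intro t ht
    have h1 : v t ≠ 0 := (Finset.mem_filter.1 ht).2
    have h2 : v t ^ 2 ≤ 2 := by
      rw [← hsum]
      exact Finset.single_le_sum (f := fun t => v t ^ 2) (fun i _ => sq_nonneg _) ht
    have hgt : -2 < v t := by nlinarith [sq_nonneg (v t + 2)]
    have hlt : v t < 2 := by nlinarith [sq_nonneg (v t - 2)]
    omega
  have hone : ∀ t ∈ s, v t ^ 2 = 1 := by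
    intro t ht
    rcases hval t ht with h | h <;> rw [h] <;> norm_num
  have hcard : s.card = 2 := by
    have h2 : ∑ t ∈ s, v t ^ 2 = (s.card : ℤ) := by
      rw [Finset.sum_congr rfl hone]
      simp
    rw [h2] at hsum
    exact_mod_cast hsum
  obtain ⟨a, b, hab, habs⟩ := Finset.card_eq_two.1 hcard
  refine ⟨a, b, hab, ?_, ?_, ?_⟩
  · exact hval a (by rw [habs]; simp)
  · exact hval b (by rw [habs]; simp)
  · intro t hta htb
    by_contra hv
    have : t ∈ s := Finset.mem_filter.2 ⟨Finset.mem_univ _, hv⟩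
    rw [habs] at this
    simp only [Finset.mem_insert, Finset.mem_singleton] at this
    tauto

lemma is2frame_finite_card {d : ℕ} {S : Set (Fin d → ℤ)} (h : Is2Frame S) :
    S.Finite ∧ S.ncard = 2 * d := by
  obtain ⟨v, hv, rfl⟩ := h
  have hfin : (Set.range v ∪ Set.range fun i => -(v i)).Finite :=
    (Set.finite_range v).union (Set.finite_range _)
  refine ⟨hfin, ?_⟩
  have hinj : Function.Injective v := by
    intro i j hij
    by_contra hne
    have h0 := hv i j
    rw [if_neg hne] at h0
    have h2 := hv j j
    rw [if_pos rfl] at h2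
    rw [hij] at h0
    exact absurd (h0.symm.trans h2) (by norm_num)
  have hinj2 : Function.Injective (fun i => -(v i)) := fun i j hij =>
    hinj (neg_injective hij)
  have hne2 : ∀ i j, v i ≠ -(v j) := by
    intro i j hcon
    have h0 := hv i j
    rw [hcon] at h0
    have hsum : ∑ t, (-(v j)) t * v j t = -2 := by
      have h2 := hv j j
      rw [if_pos rfl] at h2
      have : ∀ t, (-(v j)) t * v j t = -(v j t * v j t) := fun t => by
        show -(v j t) * v j t = _; ring
      rw [Finset.sum_congr rfl fun t _ => this t, Finset.sum_neg_distrib, h2]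
    rw [hsum] at h0
    split_ifs at h0 <;> omega
  have hdisj : Disjoint (Set.range v) (Set.range fun i => -(v i)) := by
    rw [Set.disjoint_left]
    rintro x ⟨i, rfl⟩ ⟨j, hj⟩
    exact hne2 i j hj.symm
  rw [Set.ncard_union_eq hdisj (Set.finite_range v) (Set.finite_range _)]
  have hc1 : (Set.range v).ncard = d := by
    rw [← Nat.card_coe_set_eq, Nat.card_range_of_injective hinj,
      Nat.card_eq_fintype_card, Fintype.card_fin]
  have hc2 : (Set.range fun i => -(v i)).ncard = d := by
    rw [← Nat.card_coe_set_eq, Nat.card_range_of_injective hinj2,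
      Nat.card_eq_fintype_card, Fintype.card_fin]
  rw [hc1, hc2]
  ring

lemma ncard_iUnion_fin {X : Type*} {k : ℕ} (F : Fin k → Set X) (hfin : ∀ i, (F i).Finite)
    (hdisj : ∀ i j, i ≠ j → Disjoint (F i) (F j)) :
    (⋃ i, F i).ncard = ∑ i, (F i).ncard := by
  classical
  have hset : (⋃ i, F i) = ↑(Finset.univ.biUnion fun i => (hfin i).toFinset) := by
    ext x
    simp [Set.Finite.mem_toFinset]
  rw [hset, Set.ncard_coe_finset, Finset.card_biUnion]
  · exact Finset.sum_congr rfl fun i _ => (Set.ncard_eq_toFinset_card (F i) (hfin i)).symm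
  · intro i _ j _ hij
    rw [Function.onFun, Finset.disjoint_left]
    intro x hxi hxj
    rw [Set.Finite.mem_toFinset] at hxi hxj
    exact Set.disjoint_left.1 (hdisj i j hij) hxi hxj

end Counting


/-- for even `d ≥ 4`, the set of roots of the root lattice `D_d`
(integer vectors in `ℝ^d` of squared norm `2`) can be partitioned into `d - 1` pairwise
disjoint `2`-frames, and `d - 1` is the maximum number of pairwise disjoint `2`-frames
inside the roots of `D_d`. -/
theorem stmt10 (d : ℕ) (hd : 4 ≤ d) (hde : Even d) :
    (∃ F : Fin (d - 1) → Set (Fin d → ℤ),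
      (∀ i j, i ≠ j → Disjoint (F i) (F j)) ∧
      (⋃ i, F i) = {v : Fin d → ℤ | ∑ t, (v t) ^ 2 = 2} ∧
      ∀ i, Is2Frame (F i)) ∧
    (∀ n : ℕ, ∀ G : Fin n → Set (Fin d → ℤ),
      (∀ i j, i ≠ j → Disjoint (G i) (G j)) →
      (∀ i, G i ⊆ {v : Fin d → ℤ | ∑ t, (v t) ^ 2 = 2}) →
      (∀ i, Is2Frame (G i)) →
      n ≤ d - 1) := by
  obtain ⟨n, rfl⟩ : ∃ n, d = n + 1 := ⟨d - 1, by omega⟩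
  have hodd : Odd n := by
    rcases hde with ⟨m, hm⟩
    exact ⟨m - 1, by omega⟩
  have hnz : NeZero n := ⟨by omega⟩
  have hpart1 : ∃ F : Fin (n + 1 - 1) → Set (Fin (n + 1) → ℤ),
      (∀ i j, i ≠ j → Disjoint (F i) (F j)) ∧
      (⋃ i, F i) = {v : Fin (n + 1) → ℤ | ∑ t, (v t) ^ 2 = 2} ∧
      ∀ i, Is2Frame (F i) := by
    refine ⟨fun i => Stmt10Aux.frame n (((i : ℕ) : ZMod n)), ?_, ?_, ?_⟩
    · intro i j hij
      apply Stmt10Aux.frame_disjoint n hodd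
      intro hr
      apply hij
      have hi : (i : ℕ) < n := by have := i.isLt; omega
      have hj : (j : ℕ) < n := by have := j.isLt; omega
      have hval := congrArg ZMod.val hr
      rw [ZMod.val_natCast, ZMod.val_natCast, Nat.mod_eq_of_lt hi, Nat.mod_eq_of_lt hj] at hval
      exact Fin.ext hval
    · ext w
      simp only [Set.mem_iUnion, Set.mem_setOf_eq]
      constructor
      · rintro ⟨i, hw⟩
        rcases hw with ⟨k, rfl⟩ | ⟨k, rfl⟩
        · exact Stmt10Aux.fv_is_root n hodd _ k
        · simpa [neg_sq] using Stmt10Aux.fv_is_root n hodd (((i : ℕ) : ZMod n)) k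
      · intro hw
        obtain ⟨a, b, hab, ha, hb, h0⟩ := root_struct w hw
        obtain ⟨r, hr⟩ := Stmt10Aux.mtch_surj n hodd a b hab
        refine ⟨⟨r.val, by have := ZMod.val_lt r; omega⟩, ?_⟩
        have hrr : (((⟨r.val, by have := ZMod.val_lt r; omega⟩ : Fin (n + 1 - 1)) : ℕ) : ZMod n)
            = r := ZMod.natCast_rightInverse r
        rw [hrr]
        apply Stmt10Aux.root_mem_frame n hodd r a (w a) (w b) ha hb
        funext t
        rw [hr]
        by_cases hta : t = a
        · rw [if_pos hta, if_neg (by rw [hta]; exact hab), hta, add_zero]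
        · by_cases htb : t = b
          · rw [if_neg hta, if_pos htb, htb, zero_add]
          · rw [if_neg hta, if_neg htb, h0 t hta htb, add_zero]
    · intro i
      exact Stmt10Aux.frame_is2Frame n hodd _
  refine ⟨hpart1, ?_⟩
  intro m G hGdisj hGsub hGframe
  obtain ⟨F, hFdisj, hFunion, hFframe⟩ := hpart1
  have hFfin : ∀ i, (F i).Finite := fun i => (is2frame_finite_card (hFframe i)).1
  have hFcard : ∀ i, (F i).ncard = 2 * (n + 1) := fun i => (is2frame_finite_card (hFframe i)).2
  have hGfin : ∀ i, (G i).Finite := fun i => (is2frame_finite_card (hGframe i)).1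
  have hGcard : ∀ i, (G i).ncard = 2 * (n + 1) := fun i => (is2frame_finite_card (hGframe i)).2
  have hroots_fin : ({v : Fin (n + 1) → ℤ | ∑ t, (v t) ^ 2 = 2}).Finite := by
    rw [← hFunion]
    exact Set.finite_iUnion hFfin
  have hroots_card : ({v : Fin (n + 1) → ℤ | ∑ t, (v t) ^ 2 = 2}).ncard = n * (2 * (n + 1)) := by
    rw [← hFunion, ncard_iUnion_fin F hFfin hFdisj,
      Finset.sum_congr rfl fun i _ => hFcard i, Finset.sum_const, Finset.card_univ,
      Fintype.card_fin, smul_eq_mul]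
    congr 1
  have hG_card : (⋃ i, G i).ncard = m * (2 * (n + 1)) := by
    rw [ncard_iUnion_fin G hGfin hGdisj,
      Finset.sum_congr rfl fun i _ => hGcard i, Finset.sum_const, Finset.card_univ,
      Fintype.card_fin, smul_eq_mul]
  have hsub : (⋃ i, G i) ⊆ {v : Fin (n + 1) → ℤ | ∑ t, (v t) ^ 2 = 2} :=
    Set.iUnion_subset hGsub
  have hle : m * (2 * (n + 1)) ≤ n * (2 * (n + 1)) := by
    rw [← hG_card, ← hroots_card]
    exact Set.ncard_le_ncard hsub hroots_fin
  clear hroots_card hG_card hsub hroots_fin hFfin hFcard hGfin hGcard hFdisj hFunion hFframe hGdisj hGsub hGframe F G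
  have hmn : m ≤ n := le_of_mul_le_mul_right hle (show 0 < 2 * (n + 1) by omega)
  omega
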